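/- arXiv:1909.00530 — 7 statements merged into one kernel-verified Lean document; each statement's English description precedes it below -/
import Mathlib

section
/- Let G be a finite connected simple graph with minimum degree at least δ. For any vertex v of G and any integer r with 1 ≤ r ≤ ecc(v), the closed ball N_r(v) satisfies |N_r(v)| ≥ ⌊(r+2)/3⌋ · (δ + 1). -/
/-- The eccentricity of a vertex `v`: the maximum distance from `v` to any vertex. -/
noncomputable def eccent {V : Type} [Fintype V] (G : SimpleGraph V) (v : V) : ℕ :=
  Finset.univ.sup fun w => G.dist v w

/-- Along any walk, there is a vertex splitting the length. -/
lemma exists_split_of_walk {V : Type} (G : SimpleGraph V) (hconn : G.Connected)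
    {v w : V} (p : G.Walk v w) :
    ∀ d ≤ p.length, ∃ u, G.dist v u ≤ d ∧ G.dist u w ≤ p.length - d := by
  induction p with
  | nil =>
    intro d hd
    simp only [SimpleGraph.Walk.length_nil, Nat.le_zero] at hd
    subst hd
    exact ⟨_, SimpleGraph.dist_self.le, by simp⟩
  | @cons a b c h q ih =>
    intro d hd
    match d with
    | 0 =>
      refine ⟨a, by simp, ?_⟩
      simpa using SimpleGraph.dist_le (SimpleGraph.Walk.cons h q)
    | (e + 1) =>
      obtain ⟨u, hu1, hu2⟩ := ih e (by simpa [Nat.succ_le_succ_iff] using hd)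
      refine ⟨u, ?_, by simpa using hu2⟩
      have hab : G.dist a b ≤ 1 := by
        simpa using SimpleGraph.dist_le (SimpleGraph.Walk.cons h SimpleGraph.Walk.nil)
      have htri : G.dist a u ≤ G.dist a b + G.dist b u := hconn.dist_triangle
      omega

/-- Intermediate value property of the graph distance. -/
lemma exists_dist_eq' {V : Type} (G : SimpleGraph V) (hconn : G.Connected)
    {v w : V} {d : ℕ} (hd : d ≤ G.dist v w) : ∃ u, G.dist v u = d := by
  obtain ⟨p, hp⟩ := hconn.exists_walk_length_eq_dist v w
  obtain ⟨u, hu1, hu2⟩ := exists_split_of_walk G hconn p d (by omega)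
  refine ⟨u, le_antisymm hu1 ?_⟩
  have htri : G.dist v w ≤ G.dist v u + G.dist u w := hconn.dist_triangle
  omega

/-- For a finite connected simple graph `G` with minimum degree at least `δ`,
any vertex `v` and any `r` with `1 ≤ r ≤ ecc(v)`, the closed ball of radius `r`
around `v` has at least `⌊(r+2)/3⌋ * (δ+1)` vertices. -/
theorem ball_card_lower_bound {V : Type} [Fintype V] (G : SimpleGraph V)
    [DecidableRel G.Adj] (hconn : G.Connected) (δ : ℕ) (hδ : δ ≤ G.minDegree)
    (v : V) (r : ℕ) (hr1 : 1 ≤ r) (hr2 : r ≤ eccent G v) :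
    ((r + 2) / 3) * (δ + 1) ≤ {w : V | G.dist v w ≤ r}.ncard := by
  classical
  set k := (r + 2) / 3 with hk
  have hk1 : 1 ≤ k := by
    have : 3 ≤ r + 2 := by omega
    exact Nat.one_le_div_iff (by norm_num) |>.2 this
  have h3k : 3 * k ≤ r + 2 := by
    have := Nat.div_mul_le_self (r + 2) 3
    omega
  -- a vertex realizing the eccentricity
  obtain ⟨w, -, hw⟩ := Finset.exists_mem_eq_sup (Finset.univ : Finset V)
    ⟨v, Finset.mem_univ v⟩ (fun w => G.dist v w)
  have hrw : r ≤ G.dist v w := by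
    rw [eccent] at hr2; omega
  -- choose vertices at distance 3i from v
  have hex : ∀ i : ℕ, ∃ u : V, i < k → G.dist v u = 3 * i := by
    intro i
    by_cases hi : i < k
    · obtain ⟨u, hu⟩ := exists_dist_eq' G hconn (v := v) (w := w) (d := 3 * i) (by omega)
      exact ⟨u, fun _ => hu⟩
    · exact ⟨v, fun h => absurd h hi⟩
  choose u hu using hex
  -- distances from balls of radius 1
  have hball : ∀ i < k, ∀ x ∈ insert (u i) (G.neighborFinset (u i)), G.dist (u i) x ≤ 1 := by
    intro i _ x hx
    rcases Finset.mem_insert.1 hx with h | h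
    · simp [h, SimpleGraph.dist_self]
    · rw [SimpleGraph.mem_neighborFinset] at h
      exact le_of_eq (SimpleGraph.dist_eq_one_iff_adj.2 h)
  set F : Finset V := (Finset.range k).biUnion
      (fun i => insert (u i) (G.neighborFinset (u i))) with hF
  have hdisj : ∀ i ∈ Finset.range k, ∀ j ∈ Finset.range k, i ≠ j →
      Disjoint (insert (u i) (G.neighborFinset (u i)))
        (insert (u j) (G.neighborFinset (u j))) := by
    intro i hi j hj hij
    rw [Finset.mem_range] at hi hj
    rw [Finset.disjoint_left]
    intro x hxi hxj
    have h1 := hball i hi x hxi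
    have h2 := hball j hj x hxj
    have hij' : G.dist (u i) (u j) ≤ 2 := by
      calc G.dist (u i) (u j) ≤ G.dist (u i) x + G.dist x (u j) := hconn.dist_triangle
        _ ≤ 1 + 1 := by rw [SimpleGraph.dist_comm (u := x)]; omega
        _ = 2 := rfl
    have hvi := hu i hi
    have hvj := hu j hj
    have t1 : G.dist v (u j) ≤ G.dist v (u i) + G.dist (u i) (u j) := hconn.dist_triangle
    have t2 : G.dist v (u i) ≤ G.dist v (u j) + G.dist (u j) (u i) := hconn.dist_triangle
    rw [SimpleGraph.dist_comm (u := u j)] at t2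
    omega
  have hcard : k * (δ + 1) ≤ F.card := by
    rw [hF, Finset.card_biUnion hdisj]
    calc k * (δ + 1) = ∑ _i ∈ Finset.range k, (δ + 1) := by
          simp [Finset.sum_const, Nat.mul_comm]
      _ ≤ ∑ i ∈ Finset.range k, (insert (u i) (G.neighborFinset (u i))).card := by
          apply Finset.sum_le_sum
          intro i _
          rw [Finset.card_insert_of_notMem (by simp), SimpleGraph.card_neighborFinset_eq_degree]
          have := G.minDegree_le_degree (u i)
          omega
  have hsub : (↑F : Set V) ⊆ {w : V | G.dist v w ≤ r} := by
    intro x hx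
    simp only [hF, Finset.coe_biUnion, Set.mem_iUnion, Finset.mem_coe,
      Finset.mem_range] at hx
    obtain ⟨i, hi, hxi⟩ := hx
    have hi' : i < k := by simpa using hi
    have h1 := hball i hi' x hxi
    have h2 : G.dist v x ≤ G.dist v (u i) + G.dist (u i) x := hconn.dist_triangle
    have h3 := hu i hi'
    simp only [Set.mem_setOf_eq]
    omega
  calc k * (δ + 1) ≤ F.card := hcard
    _ = (↑F : Set V).ncard := (Set.ncard_coe_finset F).symm
    _ ≤ {w : V | G.dist v w ≤ r}.ncard := Set.ncard_le_ncard hsub (Set.toFinite _)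
end

section
/- Let G be a finite connected simple graph on n vertices with minimum degree at least δ. Suppose A is a set of vertices of G such that, for some integer r with 1 ≤ r ≤ rad(G), the distance between each pair of distinct vertices in A is greater than 2r. Then |A| ≤ 3n / (r(δ + 1)). -/
/-- The radius of a graph: the minimum eccentricity over all vertices. -/
noncomputable def graphRadius {V : Type} [Fintype V] (G : SimpleGraph V) : ℕ :=
  sInf (Set.range (eccent G))

open Finset SimpleGraph

variable {V : Type} [Fintype V] {G : SimpleGraph V}

lemma dist_getVert_le (hconn : G.Connected) {a w : V} (p : G.Walk a w) (k : ℕ) :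
    G.dist a (p.getVert k) ≤ k := by
  induction k with
  | zero => simp [p.getVert_zero]
  | succ k ih =>
    by_cases hk : k < p.length
    · have hadj := p.adj_getVert_succ hk
      calc G.dist a (p.getVert (k+1))
          ≤ G.dist a (p.getVert k) + G.dist (p.getVert k) (p.getVert (k+1)) :=
            hconn.dist_triangle
        _ ≤ k + 1 := by
            have : G.dist (p.getVert k) (p.getVert (k+1)) = 1 :=
              (SimpleGraph.dist_eq_one_iff_adj).2 hadj
            omega
    · rw [p.getVert_of_length_le (by omega)]
      have := p.getVert_of_length_le (i := k) (by omega)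
      rw [← this]
      omega

lemma dist_getVert_eq (hconn : G.Connected) {a w : V} (p : G.Walk a w)
    (hp : p.length = G.dist a w) {k : ℕ} (hk : k ≤ p.length) :
    G.dist a (p.getVert k) = k := by
  have h1 : G.dist a (p.getVert k) ≤ k := dist_getVert_le hconn p k
  have h2 : G.dist (p.getVert k) w ≤ p.length - k := by
    have := dist_getVert_le hconn p.reverse (p.length - k)
    rw [p.getVert_reverse] at this
    have hk' : p.length - (p.length - k) = k := by omega
    rw [hk'] at this
    rwa [SimpleGraph.dist_comm] at this
  have h3 : G.dist a w ≤ G.dist a (p.getVert k) + G.dist (p.getVert k) w :=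
    hconn.dist_triangle
  omega

lemma ball_card_lb [DecidableEq V] [DecidableRel G.Adj] (hconn : G.Connected) {δ : ℕ} (hδ : δ ≤ G.minDegree) (a : V) {r : ℕ} (hr1 : 1 ≤ r) (hecc : r ≤ _root_.eccent G a) :
    r * (δ + 1) ≤ 3 * (univ.filter (fun u => G.dist a u ≤ r)).card := by
  -- find a vertex at distance ≥ r
  have hne : (univ : Finset V).Nonempty := ⟨a, mem_univ a⟩
  obtain ⟨w, -, hw⟩ := Finset.exists_mem_eq_sup univ hne (fun w => G.dist a w)
  have hrw : r ≤ G.dist a w := hw ▸ hecc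
  obtain ⟨p, hp⟩ := hconn.exists_walk_length_eq_dist a w
  have hrlen : r ≤ p.length := by omega
  set m : ℕ := (r - 1) / 3 + 1 with hm
  have h3i : ∀ i < m, 3 * i + 1 ≤ r := by
    intro i hi
    have : i ≤ (r - 1) / 3 := by omega
    have := Nat.mul_le_mul_left 3 this
    have h3 : 3 * ((r - 1) / 3) ≤ r - 1 := Nat.mul_div_le (r-1) 3
    omega
  have hdist : ∀ i < m, G.dist a (p.getVert (3 * i)) = 3 * i := by
    intro i hi
    exact dist_getVert_eq hconn p hp (by have := h3i i hi; omega)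
  set f : ℕ → Finset V := fun i => insert (p.getVert (3 * i))
    (G.neighborFinset (p.getVert (3 * i))) with hf
  have hcard : ∀ i, δ + 1 ≤ (f i).card := by
    intro i
    have hnotmem : p.getVert (3 * i) ∉ G.neighborFinset (p.getVert (3 * i)) := by
      simp [G.irrefl]
    rw [hf]
    simp only [Finset.card_insert_of_notMem hnotmem, card_neighborFinset_eq_degree]
    have := G.minDegree_le_degree (p.getVert (3 * i))
    omega
  have hmemdist : ∀ i, ∀ u ∈ f i, G.dist (p.getVert (3 * i)) u ≤ 1 := by
    intro i u hu
    rw [hf] at hu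
    simp only [Finset.mem_insert, mem_neighborFinset] at hu
    rcases hu with rfl | hadj
    · rw [SimpleGraph.dist_self]; omega
    · exact le_of_eq ((SimpleGraph.dist_eq_one_iff_adj).2 hadj)
  have hsub : ∀ i ∈ range m, f i ⊆ univ.filter (fun u => G.dist a u ≤ r) := by
    intro i hi u hu
    rw [mem_range] at hi
    simp only [mem_filter, mem_univ, true_and]
    calc G.dist a u ≤ G.dist a (p.getVert (3 * i)) + G.dist (p.getVert (3 * i)) u :=
          hconn.dist_triangle
      _ ≤ 3 * i + 1 := by rw [hdist i hi]; exact Nat.add_le_add_left (hmemdist i u hu) _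
      _ ≤ r := h3i i hi
  have hdisj : ∀ i ∈ range m, ∀ j ∈ range m, i ≠ j → Disjoint (f i) (f j) := by
    intro i hi j hj hij
    rw [mem_range] at hi hj
    rw [Finset.disjoint_left]
    intro u hui huj
    have hd1 := hmemdist i u hui
    have hd2 := hmemdist j u huj
    have htri : G.dist (p.getVert (3 * i)) (p.getVert (3 * j)) ≤ 2 := by
      calc G.dist (p.getVert (3 * i)) (p.getVert (3 * j))
          ≤ G.dist (p.getVert (3 * i)) u + G.dist u (p.getVert (3 * j)) :=
            hconn.dist_triangle
        _ ≤ 2 := by rw [SimpleGraph.dist_comm] at hd2; omega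
    -- but distance between them is ≥ 3
    rcases Nat.lt_or_ge i j with h | h
    · have h1 := hdist i hi
      have h2 := hdist j hj
      have : G.dist a (p.getVert (3 * j)) ≤ G.dist a (p.getVert (3 * i)) +
          G.dist (p.getVert (3 * i)) (p.getVert (3 * j)) := hconn.dist_triangle
      omega
    · have hji : j < i := by omega
      have h1 := hdist i hi
      have h2 := hdist j hj
      have : G.dist a (p.getVert (3 * i)) ≤ G.dist a (p.getVert (3 * j)) +
          G.dist (p.getVert (3 * j)) (p.getVert (3 * i)) := hconn.dist_triangle
      rw [SimpleGraph.dist_comm (u := p.getVert (3*i))] at htri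
      omega
  have hbu : ((range m).biUnion f).card ≤ (univ.filter (fun u => G.dist a u ≤ r)).card :=
    Finset.card_le_card (Finset.biUnion_subset.2 hsub)
  rw [Finset.card_biUnion hdisj] at hbu
  have hsum : m * (δ + 1) ≤ ∑ i ∈ range m, (f i).card := by
    calc m * (δ + 1) = ∑ _i ∈ range m, (δ + 1) := by rw [Finset.sum_const, card_range]; ring
      _ ≤ ∑ i ∈ range m, (f i).card := Finset.sum_le_sum fun i _ => hcard i
  have hrm : r ≤ 3 * m := by
    have h1 := Nat.div_add_mod (r - 1) 3
    have h2 : (r - 1) % 3 < 3 := Nat.mod_lt _ (by norm_num)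
    omega
  calc r * (δ + 1) ≤ 3 * m * (δ + 1) := Nat.mul_le_mul_right _ hrm
    _ = 3 * (m * (δ + 1)) := by ring
    _ ≤ 3 * ∑ i ∈ range m, (f i).card := by omega
    _ ≤ 3 * (univ.filter (fun u => G.dist a u ≤ r)).card := by omega

/-- If `G` is a finite connected graph on `n` vertices with minimum degree at least `δ`,
and `A` is a set of vertices whose pairwise distances exceed `2r` for some
`1 ≤ r ≤ rad(G)`, then `|A| ≤ 3n / (r(δ+1))`. -/
theorem scattered_set_card_upper_bound {V : Type} [Fintype V] (G : SimpleGraph V)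
    [DecidableRel G.Adj] (hconn : G.Connected) (n δ : ℕ) (hn : Fintype.card V = n)
    (hδ : δ ≤ G.minDegree) (A : Finset V) (r : ℕ) (hr1 : 1 ≤ r) (hr2 : r ≤ graphRadius G)
    (hA : ∀ u ∈ A, ∀ v ∈ A, u ≠ v → 2 * r < G.dist u v) :
    (A.card : ℝ) ≤ 3 * n / (r * (δ + 1)) := by
  classical
  have hpos : (0 : ℝ) < (r : ℝ) * ((δ : ℝ) + 1) := by positivity
  rw [le_div_iff₀ hpos]
  have key : A.card * (r * (δ + 1)) ≤ 3 * n := by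
    set B : V → Finset V := fun a => univ.filter (fun u => G.dist a u ≤ r) with hB
    have hdisj : ∀ a ∈ A, ∀ b ∈ A, a ≠ b → Disjoint (B a) (B b) := by
      intro a ha b hb hab
      rw [Finset.disjoint_left]
      intro u hua hub
      rw [hB] at hua hub
      simp only [mem_filter] at hua hub
      have htri : G.dist a b ≤ 2 * r := by
        calc G.dist a b ≤ G.dist a u + G.dist u b := hconn.dist_triangle
          _ ≤ 2 * r := by
              rw [SimpleGraph.dist_comm (u := b)] at hub
              omega
      have := hA a ha b hb hab
      omega
    have hball : ∀ a, r * (δ + 1) ≤ 3 * (B a).card := by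
      intro a
      exact ball_card_lb hconn hδ a hr1 (le_trans hr2 (Nat.sInf_le ⟨a, rfl⟩))
    calc A.card * (r * (δ + 1)) = ∑ _a ∈ A, r * (δ + 1) := by
          rw [Finset.sum_const]; ring
      _ ≤ ∑ a ∈ A, 3 * (B a).card := Finset.sum_le_sum fun a ha => hball a
      _ = 3 * ∑ a ∈ A, (B a).card := by rw [Finset.mul_sum]
      _ = 3 * (A.biUnion B).card := by rw [Finset.card_biUnion hdisj]
      _ ≤ 3 * Fintype.card V := by
          have := Finset.card_le_card (Finset.subset_univ (A.biUnion B))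
          rw [Finset.card_univ] at this
          omega
      _ = 3 * n := by rw [hn]
  calc (A.card : ℝ) * ((r : ℝ) * ((δ : ℝ) + 1)) = ((A.card * (r * (δ + 1)) : ℕ) : ℝ) := by
        push_cast; ring
    _ ≤ ((3 * n : ℕ) : ℝ) := by exact_mod_cast key
    _ = 3 * n := by push_cast; ring
end

section
/- For every finite connected simple graph G on n vertices with minimum degree at least 23, the burning number of G is at most ⌈√n⌉. -/
/-- `a : Fin m → V` is a burning sequence of length `m` for `G`: the vertex activated
in round `i+1` is `a i`, and every vertex `v` must be within distance `m - (i+1)` of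
some activator `a i`. -/
def IsBurningSeq {V : Type} (G : SimpleGraph V) (m : ℕ) (a : Fin m → V) : Prop :=
  ∀ v : V, ∃ i : Fin m, G.dist v (a i) ≤ m - (i.val + 1)

/-- The burning number of `G`: the least `m` for which `G` has a burning sequence
of length `m`. -/
noncomputable def burningNumber {V : Type} (G : SimpleGraph V) : ℕ :=
  sInf {m : ℕ | ∃ a : Fin m → V, IsBurningSeq G m a}

open Finset SimpleGraph

namespace BurningAux

set_option linter.unusedSectionVars false

variable {V : Type} {G : SimpleGraph V}


lemma dist_getVert_le (hconn : G.Connected) {u v : V} (p : G.Walk u v) (i : ℕ) :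
    G.dist u (p.getVert i) ≤ i := by
  induction i with
  | zero => simp [SimpleGraph.Walk.getVert_zero, SimpleGraph.dist_self]
  | succ i ih =>
    by_cases h : i < p.length
    · have hadj := p.adj_getVert_succ h
      have h1 : G.dist (p.getVert i) (p.getVert (i+1)) = 1 :=
        SimpleGraph.dist_eq_one_iff_adj.mpr hadj
      have htri := hconn.dist_triangle (u := u) (v := p.getVert i) (w := p.getVert (i+1))
      omega
    · push_neg at h
      have e1 : p.getVert (i+1) = v := p.getVert_of_length_le (le_trans h (Nat.le_succ i))
      have e2 : p.getVert i = v := p.getVert_of_length_le h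
      rw [e1, ← e2]
      omega

lemma getVert_dist_ge (hconn : G.Connected) {u v : V} (p : G.Walk u v)
    (hp : p.length = G.dist u v) {i j : ℕ} (hij : i ≤ j) (hj : j ≤ p.length) :
    j - i ≤ G.dist (p.getVert i) (p.getVert j) := by
  have h1 : G.dist u v ≤ G.dist u (p.getVert i) + G.dist (p.getVert i) (p.getVert j)
      + G.dist (p.getVert j) v := by
    have := hconn.dist_triangle (u := u) (v := p.getVert i) (w := p.getVert j)
    have := hconn.dist_triangle (u := u) (v := p.getVert j) (w := v)
    omega
  have h2 : G.dist u (p.getVert i) ≤ i := dist_getVert_le hconn p i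
  have h3 : G.dist (p.getVert j) v ≤ p.length - j := by
    have hrev : p.reverse.getVert (p.length - j) = p.getVert j := by
      rw [SimpleGraph.Walk.getVert_reverse]
      congr 1
      omega
    have := dist_getVert_le hconn p.reverse (p.length - j)
    rw [hrev] at this
    calc G.dist (p.getVert j) v = G.dist v (p.getVert j) := SimpleGraph.dist_comm
      _ ≤ p.length - j := this
  omega

variable [Fintype V] [DecidableEq V] [DecidableRel G.Adj]

/-- closed neighborhood -/
def cnbhd (G : SimpleGraph V) [Fintype V] [DecidableEq V] [DecidableRel G.Adj] (v : V) : Finset V :=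
  insert v (G.neighborFinset v)

lemma card_cnbhd (v : V) : (cnbhd G v).card = G.degree v + 1 := by
  rw [cnbhd, Finset.card_insert_of_notMem (by simp), SimpleGraph.card_neighborFinset_eq_degree]

lemma cnbhd_dist_le (hconn : G.Connected) {v y : V} (hy : y ∈ cnbhd G v) (x : V) :
    G.dist x y ≤ G.dist x v + 1 := by
  rcases Finset.mem_insert.mp hy with h | h
  · subst h; omega
  · have : G.dist v y = 1 := SimpleGraph.dist_eq_one_iff_adj.mpr
      ((SimpleGraph.mem_neighborFinset _ _ _).mp h)
    have := hconn.dist_triangle (u := x) (v := v) (w := y)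
    omega

lemma cnbhd_disjoint (hconn : G.Connected) {a b : V} (hab : 3 ≤ G.dist a b) :
    Disjoint (cnbhd G a) (cnbhd G b) := by
  rw [Finset.disjoint_left]
  intro y hya hyb
  have h1 : G.dist a y ≤ G.dist a a + 1 := cnbhd_dist_le hconn hya a
  have h2 : G.dist b y ≤ G.dist b b + 1 := cnbhd_dist_le hconn hyb b
  have h3 := hconn.dist_triangle (u := a) (v := y) (w := b)
  have h4 : G.dist y b = G.dist b y := SimpleGraph.dist_comm
  have h5 : G.dist a a = 0 := SimpleGraph.dist_self
  have h6 : G.dist b b = 0 := SimpleGraph.dist_self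
  omega

/-- ball growth: if some vertex is at distance ≥ r from x, the ball of radius r around x
has at least 24 * ((r+2)/3) vertices, given min degree ≥ 23. -/
lemma ball_card_ge (hconn : G.Connected) (hδ : 23 ≤ G.minDegree) {x w : V} {r : ℕ}
    (hr : 1 ≤ r) (hw : r ≤ G.dist x w) :
    24 * ((r + 2) / 3) ≤ (Finset.univ.filter (fun y => G.dist x y ≤ r)).card := by
  obtain ⟨p, hp⟩ := hconn.exists_walk_length_eq_dist x w
  set t := (r - 1) / 3 with ht
  have hsub : (Finset.range (t+1)).biUnion (fun s => cnbhd G (p.getVert (3*s)))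
      ⊆ Finset.univ.filter (fun y => G.dist x y ≤ r) := by
    intro y hy
    simp only [Finset.mem_biUnion, Finset.mem_range] at hy
    obtain ⟨s, hs, hys⟩ := hy
    have h1 : G.dist x (p.getVert (3*s)) ≤ 3*s := dist_getVert_le hconn p (3*s)
    have h2 := cnbhd_dist_le hconn hys x
    have h3 : 3*s ≤ r - 1 := by omega
    simp only [Finset.mem_filter, Finset.mem_univ, true_and]
    omega
  have hdisj : ∀ s ∈ Finset.range (t+1), ∀ s' ∈ Finset.range (t+1), s ≠ s' →
      Disjoint (cnbhd G (p.getVert (3*s))) (cnbhd G (p.getVert (3*s'))) := by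
    have key : ∀ s s' : ℕ, s < s' → s' ≤ t →
        Disjoint (cnbhd G (p.getVert (3*s))) (cnbhd G (p.getVert (3*s'))) := by
      intro s s' hss hs't
      apply cnbhd_disjoint hconn
      have : 3*s' - 3*s ≤ G.dist (p.getVert (3*s)) (p.getVert (3*s')) := by
        apply getVert_dist_ge hconn p hp (by omega)
        have : 3 * s' ≤ r - 1 := by omega
        omega
      omega
    intro s hs s' hs' hne
    simp only [Finset.mem_range] at hs hs'
    rcases Nat.lt_or_ge s s' with h | h
    · exact key s s' h (by omega)
    · exact (key s' s (by omega) (by omega)).symm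
  calc 24 * ((r + 2) / 3) = 24 * (t + 1) := by omega
    _ ≤ ∑ s ∈ Finset.range (t+1), (cnbhd G (p.getVert (3*s))).card := by
        have : ∀ s ∈ Finset.range (t+1), 24 ≤ (cnbhd G (p.getVert (3*s))).card := by
          intro s _
          rw [card_cnbhd]
          have := G.minDegree_le_degree (p.getVert (3*s))
          omega
        calc 24 * (t+1) = ∑ _s ∈ Finset.range (t+1), 24 := by
              rw [Finset.sum_const, Finset.card_range]; ring
          _ ≤ _ := Finset.sum_le_sum this
    _ = ((Finset.range (t+1)).biUnion (fun s => cnbhd G (p.getVert (3*s)))).card :=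
        (Finset.card_biUnion hdisj).symm
    _ ≤ _ := Finset.card_le_card hsub

/-- per-slot lower bound on ball sizes -/
def bnd (m : ℕ) : ℕ := if 2 ≤ m then max 24 (8 * (m / 2)) else 1

lemma bnd_ge_half (m : ℕ) : 8 * (m / 2) ≤ bnd m ∧ 1 ≤ bnd m ∧ (2 ≤ m → 24 ≤ bnd m) := by
  unfold bnd
  split_ifs with h
  · exact ⟨le_max_right _ _, by omega, fun _ => le_max_left _ _⟩
  · refine ⟨by omega, le_refl _, by omega⟩

lemma sum_bnd_gt {k : ℕ} (hk : 5 ≤ k) : k * k < ∑ m ∈ Finset.range k, bnd m := by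
  rcases Nat.lt_or_ge k 7 with h7 | h7
  · interval_cases k <;> decide
  · have per : ∀ m ∈ Finset.range k, 4 * m ≤ bnd m + 4 := by
      intro m _
      have := (bnd_ge_half m).1
      omega
    have hsum : ∑ m ∈ Finset.range k, 4 * m ≤ ∑ m ∈ Finset.range k, (bnd m + 4) :=
      Finset.sum_le_sum per
    have h1 : ∑ m ∈ Finset.range k, 4 * m = 2 * (k * (k-1)) := by
      rw [← Finset.mul_sum]
      have := Finset.sum_range_id_mul_two k
      omega
    have h2 : ∑ m ∈ Finset.range k, (bnd m + 4) = (∑ m ∈ Finset.range k, bnd m) + 4 * k := by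
      rw [Finset.sum_add_distrib, Finset.sum_const, Finset.card_range, smul_eq_mul]
      ring
    have hS : 2 * (k * (k-1)) ≤ (∑ m ∈ Finset.range k, bnd m) + 4 * k := by omega
    zify [show 1 ≤ k by omega] at hS ⊢
    nlinarith

lemma burning_of_covered {k i : ℕ} (hik : i ≤ k) (hi : 0 < i) (x : Fin i → V)
    (hcov : ∀ v : V, ∃ l : Fin i, G.dist v (x l) ≤ k - (l.val + 1)) :
    ∃ a : Fin k → V, IsBurningSeq G k a := by
  refine ⟨fun j => if h : j.val < i then x ⟨j.val, h⟩ else x ⟨0, hi⟩, fun v => ?_⟩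
  obtain ⟨l, hl⟩ := hcov v
  refine ⟨⟨l.val, lt_of_lt_of_le l.2 hik⟩, ?_⟩
  simpa [l.2] using hl

lemma exists_far_family (hconn : G.Connected) {k : ℕ}
    (hnb : ¬ ∃ a : Fin k → V, IsBurningSeq G k a) :
    ∃ (x : Fin k → V) (v : V),
      (∀ l l' : Fin k, l.val < l'.val → k - (l.val + 1) < G.dist (x l') (x l)) ∧
      (∀ l : Fin k, k - (l.val + 1) < G.dist v (x l)) := by
  have hne : Nonempty V := hconn.nonempty
  have key : ∀ i, i ≤ k → ∃ x : Fin i → V,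
      (∀ l l' : Fin i, l.val < l'.val → k - (l.val + 1) < G.dist (x l') (x l)) ∧
      ∃ v : V, ∀ l : Fin i, k - (l.val + 1) < G.dist v (x l) := by
    intro i
    induction i with
    | zero =>
      intro _
      exact ⟨fun l => l.elim0, fun l => l.elim0, Classical.arbitrary V, fun l => l.elim0⟩
    | succ i ih =>
      intro hik
      obtain ⟨x, hx, v, hv⟩ := ih (by omega)
      refine ⟨fun j => if h : j.val < i then x ⟨j.val, h⟩ else v, ?_, ?_⟩
      · intro l l' hll'
        by_cases h' : l'.val < i
        · have h : l.val < i := by omega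
          simpa [h, h'] using hx ⟨l.val, h⟩ ⟨l'.val, h'⟩ hll'
        · have h : l.val < i := by omega
          simpa [h, h'] using hv ⟨l.val, h⟩
      · by_contra hno
        push_neg at hno
        apply hnb
        apply burning_of_covered hik (by omega) _
        intro w
        obtain ⟨l, hl⟩ := hno w
        exact ⟨l, hl⟩
  obtain ⟨x, hx, v, hv⟩ := key k le_rfl
  exact ⟨x, v, hx, hv⟩

theorem main_bound (hconn : G.Connected) (n : ℕ) (hn : Fintype.card V = n)
    (hδ : 23 ≤ G.minDegree) {k : ℕ} (hk5 : 5 ≤ k) (hnk : n ≤ k * k) :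
    ∃ a : Fin k → V, IsBurningSeq G k a := by
  by_contra hnb
  obtain ⟨x, v, hx, hv⟩ := exists_far_family hconn hnb
  set B : Fin k → Finset V := fun l =>
    Finset.univ.filter (fun y => G.dist (x l) y ≤ (k - (l.val + 1)) / 2) with hB
  have hdisj' : ∀ l l' : Fin k, l.val < l'.val → Disjoint (B l) (B l') := by
    intro l l' hll'
    rw [Finset.disjoint_left]
    intro y hy hy'
    simp only [hB, Finset.mem_filter, Finset.mem_univ, true_and] at hy hy'
    have h1 := hx l l' hll'
    have h2 := hconn.dist_triangle (u := x l') (v := y) (w := x l)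
    have h3 : G.dist y (x l) = G.dist (x l) y := SimpleGraph.dist_comm
    have h4 : G.dist (x l') y = G.dist y (x l') := SimpleGraph.dist_comm
    have h5 : l'.val < k := l'.2
    omega
  have hcard : ∀ l : Fin k, bnd (k - (l.val + 1)) ≤ (B l).card := by
    intro l
    set m := k - (l.val + 1) with hm
    rcases Nat.lt_or_ge m 2 with h2 | h2
    · have hb : bnd m = 1 := by unfold bnd; rw [if_neg (by omega)]
      rw [hb]
      refine Finset.card_pos.mpr ⟨x l, ?_⟩
      simp [hB, SimpleGraph.dist_self]
    · have hr1 : 1 ≤ m / 2 := by omega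
      have hw : m / 2 ≤ G.dist (x l) v := by
        have := hv l
        have : G.dist v (x l) = G.dist (x l) v := SimpleGraph.dist_comm
        have := hv l
        omega
      have hball := ball_card_ge hconn hδ hr1 hw
      have hle : bnd m ≤ 24 * ((m / 2 + 2) / 3) := by
        unfold bnd
        rw [if_pos h2]
        apply max_le <;> omega
      exact le_trans hle hball
  have htot : ∑ l : Fin k, bnd (k - (l.val + 1)) ≤ n := by
    calc ∑ l : Fin k, bnd (k - (l.val + 1)) ≤ ∑ l : Fin k, (B l).card :=
          Finset.sum_le_sum (fun l _ => hcard l)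
      _ = (Finset.univ.biUnion B).card :=
          (Finset.card_biUnion (fun l _ l' _ hne => by
            rcases Nat.lt_or_ge l.val l'.val with h | h
            · exact hdisj' l l' h
            · exact (hdisj' l' l (by omega : l'.val < l.val)).symm)).symm
      _ ≤ (Finset.univ : Finset V).card := Finset.card_le_card (Finset.subset_univ _)
      _ = n := hn
  have hre : ∑ l : Fin k, bnd (k - (l.val + 1)) = ∑ m ∈ Finset.range k, bnd m := by
    rw [Fin.sum_univ_eq_sum_range (fun i => bnd (k - (i + 1)))]
    rw [← Finset.sum_range_reflect (fun m => bnd m) k]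
    exact Finset.sum_congr rfl (fun i hi => by
      simp only [Finset.mem_range] at hi
      congr 1
      omega)
  have := sum_bnd_gt hk5
  omega

end BurningAux

/-- Every finite connected graph on `n` vertices with minimum degree at least `23`
has burning number at most `⌈√n⌉`. -/
theorem burning_number_le_of_min_degree {V : Type} [Fintype V] (G : SimpleGraph V)
    [DecidableRel G.Adj] (hconn : G.Connected) (n : ℕ) (hn : Fintype.card V = n)
    (hδ : 23 ≤ G.minDegree) :
    burningNumber G ≤ ⌈Real.sqrt (n : ℝ)⌉₊ := by
  classical
  set k := ⌈Real.sqrt (n : ℝ)⌉₊ with hk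
  have hne : Nonempty V := hconn.nonempty
  have hn24 : 24 ≤ n := by
    obtain ⟨v₀⟩ := hne
    have h1 : (BurningAux.cnbhd G v₀).card ≤ Fintype.card V :=
      le_trans (Finset.card_le_card (Finset.subset_univ _)) (le_of_eq (Finset.card_univ))
    rw [BurningAux.card_cnbhd] at h1
    have := G.minDegree_le_degree v₀
    omega
  have hk5 : 5 ≤ k := by
    have h4 : (4 : ℕ) < k := by
      rw [hk, Nat.lt_ceil]
      rw [show ((4:ℕ):ℝ) = 4 by norm_num]
      rw [Real.lt_sqrt (by norm_num)]
      have : (24 : ℝ) ≤ (n : ℝ) := by exact_mod_cast hn24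
      nlinarith
    omega
  have hnk : n ≤ k * k := by
    have h1 : Real.sqrt (n : ℝ) ≤ (k : ℝ) := Nat.le_ceil _
    have h2 : (n : ℝ) ≤ (k : ℝ) * (k : ℝ) := by
      nlinarith [Real.sq_sqrt (show (0:ℝ) ≤ (n:ℝ) by positivity),
        Real.sqrt_nonneg (n : ℝ)]
    exact_mod_cast h2
  have hex : ∃ a : Fin k → V, IsBurningSeq G k a :=
    BurningAux.main_bound hconn n hn hδ hk5 hnk
  exact Nat.sInf_le hex
end

section
/- For any finite connected simple graph G and any rooted tree decomposition T' of G, there exists a trimmed rooted tree decomposition T of G whose length is at most the length of T'. -/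
/-- A tree decomposition of a simple graph `G` indexed by `ι`: a tree on `ι`
together with a bag of vertices for each node, such that every vertex lies in some
bag, every edge is contained in some bag, and for every vertex `v` the set of nodes
whose bag contains `v` induces a (connected) subtree: every node on the unique path
between two nodes whose bags contain `v` also contains `v`. -/
structure TreeDecomp {V : Type} (G : SimpleGraph V) (ι : Type) where
  tree : SimpleGraph ι
  isTree : tree.IsTree
  bag : ι → Set V
  bag_cover : ∀ v : V, ∃ i : ι, v ∈ bag i
  bag_edge : ∀ u v : V, G.Adj u v → ∃ i : ι, u ∈ bag i ∧ v ∈ bag i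
  bag_conn : ∀ (v : V) (i j : ι), v ∈ bag i → v ∈ bag j →
    ∀ p : tree.Walk i j, p.IsPath → ∀ k ∈ p.support, v ∈ bag k

/-- In the decomposition tree rooted at `root`, node `j` belongs to the subtree
rooted at `B` iff `B` lies on every walk from `root` to `j` (equivalently, `B` is
on the unique path from the root to `j`). -/
def TreeDecomp.InSubtree {V ι : Type} {G : SimpleGraph V} (D : TreeDecomp G ι)
    (root B j : ι) : Prop :=
  ∀ p : D.tree.Walk root j, B ∈ p.support

/-- A rooted tree decomposition is trimmed if for every non-root bag `B` there is a
vertex of `G` contained in some bag of the subtree rooted at `B` and in no bag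
outside that subtree. -/
def TreeDecomp.Trimmed {V ι : Type} {G : SimpleGraph V} (D : TreeDecomp G ι)
    (root : ι) : Prop :=
  ∀ B : ι, B ≠ root → ∃ v : V,
    (∃ j : ι, D.InSubtree root B j ∧ v ∈ D.bag j) ∧
    ∀ j : ι, ¬ D.InSubtree root B j → v ∉ D.bag j

/-- The decomposition has length at most `k`: any two vertices in a common bag are
at distance at most `k` in `G`. -/
def TreeDecomp.LengthLE {V ι : Type} {G : SimpleGraph V} (D : TreeDecomp G ι)
    (k : ℕ) : Prop :=
  ∀ i : ι, ∀ u ∈ D.bag i, ∀ v ∈ D.bag i, G.dist u v ≤ k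

lemma TreeDecomp.not_inSubtree_iff {V ι : Type} {G : SimpleGraph V} (D : TreeDecomp G ι)
    (root B j : ι) :
    ¬ D.InSubtree root B j ↔ ∃ p : D.tree.Walk root j, p.IsPath ∧ B ∉ p.support := by
  classical
  constructor
  · intro h
    obtain ⟨q, hq⟩ := not_forall.mp h
    exact ⟨q.bypass, q.bypass_isPath, fun hB => hq (q.support_bypass_subset hB)⟩
  · rintro ⟨p, _, hB⟩ h
    exact hB (h p)

lemma reach_induce {κ : Type} (T : SimpleGraph κ) (S : Set κ) :
    ∀ {a b : κ} (p : T.Walk a b) (_ : ∀ k ∈ p.support, k ∈ S) (ha : a ∈ S) (hb : b ∈ S),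
    (T.induce S).Reachable ⟨a, ha⟩ ⟨b, hb⟩ := by
  intro a b p
  induction p with
  | nil => intro _ _ _; exact SimpleGraph.Reachable.refl _
  | @cons a x b h q ih =>
    intro hp ha hb
    have hx : x ∈ S := hp x (by simp [SimpleGraph.Walk.support_cons, q.start_mem_support])
    have h1 : (T.induce S).Adj ⟨a, ha⟩ ⟨x, hx⟩ := by
      simp only [SimpleGraph.comap_adj, Function.Embedding.coe_subtype]
      exact h
    exact h1.reachable.trans (ih (fun k hk => hp k (by simp [SimpleGraph.Walk.support_cons, hk])) hx hb)

theorem trim_aux {V : Type} (G : SimpleGraph V) :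
    ∀ (n : ℕ) {κ : Type} [Fintype κ] (E : TreeDecomp G κ) (root : κ),
      Fintype.card κ = n →
      ∃ (κ' : Type) (E' : TreeDecomp G κ') (root' : κ'),
        E'.Trimmed root' ∧ ∀ i : κ', ∃ j : κ, E'.bag i ⊆ E.bag j := by
  intro n
  induction n using Nat.strong_induction_on with
  | _ n ih =>
    intro κ _inst E root hcard
    classical
    by_cases htr : E.Trimmed root
    · exact ⟨κ, E, root, htr, fun i => ⟨i, subset_rfl⟩⟩
    rw [TreeDecomp.Trimmed] at htr
    push_neg at htr
    obtain ⟨B, hBne, h⟩ := htr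
    -- h : ∀ v, (∃ j, InSubtree ∧ v ∈ bag j) → ∃ j, ¬ InSubtree ∧ v ∈ bag j (roughly)
    set Sc : Set κ := {j | ¬ E.InSubtree root B j} with hSc
    have hSB : E.InSubtree root B B := fun p => p.end_mem_support
    have hrootSc : root ∈ Sc := by
      intro hIn
      have := hIn SimpleGraph.Walk.nil
      simp at this
      exact hBne this
    -- from a node of Sc there is a path from root staying in Sc
    have path_out : ∀ j ∈ Sc, ∃ p : E.tree.Walk root j, p.IsPath ∧ ∀ k ∈ p.support, k ∈ Sc := by
      intro j hj
      obtain ⟨p, hp, hB⟩ := (E.not_inSubtree_iff root B j).mp hj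
      refine ⟨p, hp, fun k hk => ?_⟩
      refine (E.not_inSubtree_iff root B k).mpr ⟨p.takeUntil k hk, hp.takeUntil hk, fun hBk => ?_⟩
      exact hB (p.support_takeUntil_subset hk hBk)
    -- the new tree
    let T₁ : SimpleGraph Sc := E.tree.induce Sc
    have htree₁ : T₁.IsTree := by
      constructor
      · haveI : Nonempty Sc := ⟨⟨root, hrootSc⟩⟩
        refine SimpleGraph.Connected.mk ?_
        rintro ⟨a, ha⟩ ⟨b, hb⟩
        obtain ⟨pa, _, hpa⟩ := path_out a ha
        obtain ⟨pb, _, hpb⟩ := path_out b hb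
        exact (reach_induce E.tree Sc pa hpa hrootSc ha).symm.trans
          (reach_induce E.tree Sc pb hpb hrootSc hb)
      · intro v c hc
        exact E.isTree.IsAcyclic
          (c.map (SimpleGraph.Embedding.induce Sc).toHom)
          (hc.map Subtype.val_injective)
    -- destruct a path from B to root to find the parent P of B
    obtain ⟨r0⟩ := E.isTree.isConnected.preconnected B root
    have hrp : r0.bypass.IsPath := r0.bypass_isPath
    revert hrp
    generalize r0.bypass = r
    intro hrp
    cases r with
    | nil => exact absurd rfl hBne
    | cons hBP r' =>
      rename_i P
      rw [SimpleGraph.Walk.cons_isPath_iff] at hrp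
      obtain ⟨hr'p, hBr'⟩ := hrp
      have hPSc : P ∈ Sc := (E.not_inSubtree_iff root B P).mpr
        ⟨r'.reverse, hr'p.reverse, by rwa [SimpleGraph.Walk.support_reverse, List.mem_reverse]⟩
      -- any vertex in bag B and in a bag outside the subtree is in bag P
      have key : ∀ j ∈ Sc, ∀ w : V, w ∈ E.bag B → w ∈ E.bag j → w ∈ E.bag P := by
        intro j hj w hwB hwj
        obtain ⟨q0⟩ := E.isTree.isConnected.preconnected B j
        have hqp : q0.bypass.IsPath := q0.bypass_isPath
        revert hqp
        generalize q0.bypass = q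
        intro hqp
        cases q with
        | nil => exact absurd hSB hj
        | cons hBx q₂ =>
          rename_i x
          rw [SimpleGraph.Walk.cons_isPath_iff] at hqp
          obtain ⟨hq₂p, hBq₂⟩ := hqp
          -- x is outside the subtree
          have hxSc : x ∈ Sc := by
            obtain ⟨a, hap, haB⟩ := (E.not_inSubtree_iff root B j).mp hj
            intro hIn
            have := hIn (a.append q₂.reverse)
            rw [SimpleGraph.Walk.mem_support_append_iff] at this
            rcases this with h1 | h1
            · exact haB h1
            · rw [SimpleGraph.Walk.support_reverse, List.mem_reverse] at h1
              exact hBq₂ h1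
          -- x = P by uniqueness of paths in a tree
          have hxP : x = P := by
            obtain ⟨ax, haxp, haxB⟩ := (E.not_inSubtree_iff root B x).mp hxSc
            have hw₁ : (SimpleGraph.Walk.cons hBx ax.reverse).IsPath := by
              rw [SimpleGraph.Walk.cons_isPath_iff]
              exact ⟨haxp.reverse, by rwa [SimpleGraph.Walk.support_reverse, List.mem_reverse]⟩
            have hw₂ : (SimpleGraph.Walk.cons hBP r').IsPath := by
              rw [SimpleGraph.Walk.cons_isPath_iff]; exact ⟨hr'p, hBr'⟩
            have heq := E.isTree.IsAcyclic.path_unique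
              ⟨SimpleGraph.Walk.cons hBx ax.reverse, hw₁⟩
              ⟨SimpleGraph.Walk.cons hBP r', hw₂⟩
            have heq' := congrArg (fun p : E.tree.Path B root => p.1.support) heq
            simp only [SimpleGraph.Walk.support_cons] at heq'
            rw [SimpleGraph.Walk.support_eq_cons ax.reverse,
              SimpleGraph.Walk.support_eq_cons r'] at heq'
            simp at heq'
            have h3 := congrArg List.head? heq'
            rw [SimpleGraph.Walk.support_eq_cons r', List.head?_cons, List.head?_cons] at h3
            exact Option.some.inj h3
          subst hxP
          exact E.bag_conn w B j hwB hwj (SimpleGraph.Walk.cons hBx q₂)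
            ((SimpleGraph.Walk.cons_isPath_iff _ _).mpr ⟨hq₂p, hBq₂⟩) x
            (by simp [SimpleGraph.Walk.support_cons, q₂.start_mem_support])
      -- the new decomposition
      let E₁ : TreeDecomp G Sc :=
        { tree := T₁
          isTree := htree₁
          bag := fun j => E.bag j.1
          bag_cover := by
            intro v
            obtain ⟨i, hvi⟩ := E.bag_cover v
            by_cases hi : i ∈ Sc
            · exact ⟨⟨i, hi⟩, hvi⟩
            · obtain ⟨j, hjS, hvj⟩ := h v ⟨i, not_not.mp hi, hvi⟩
              exact ⟨⟨j, hjS⟩, hvj⟩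
          bag_edge := by
            intro u v huv
            obtain ⟨i, hui, hvi⟩ := E.bag_edge u v huv
            by_cases hi : i ∈ Sc
            · exact ⟨⟨i, hi⟩, hui, hvi⟩
            · have hiIn : E.InSubtree root B i := not_not.mp hi
              obtain ⟨ju, hju, huju⟩ := h u ⟨i, hiIn, hui⟩
              obtain ⟨jv, hjv, hvjv⟩ := h v ⟨i, hiIn, hvi⟩
              -- u and v are both in bag B
              have hbagB : ∀ (w : V) (j : κ), j ∈ Sc → w ∈ E.bag j → w ∈ E.bag i →
                  w ∈ E.bag B := by
                intro w j hjSc hwj hwi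
                obtain ⟨a, _, haB⟩ := (E.not_inSubtree_iff root B j).mp hjSc
                obtain ⟨c0⟩ := E.isTree.isConnected.preconnected j i
                have hBc : B ∈ c0.bypass.support := by
                  by_contra hBc
                  have := hiIn (a.append c0.bypass)
                  rw [SimpleGraph.Walk.mem_support_append_iff] at this
                  exact this.elim haB hBc
                exact E.bag_conn w j i hwj hwi c0.bypass c0.bypass_isPath B hBc
              exact ⟨⟨P, hPSc⟩, key ju hju u (hbagB u ju hju huju hui) huju,
                key jv hjv v (hbagB v jv hjv hvjv hvi) hvjv⟩
          bag_conn := by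
            intro v i j hvi hvj p hp k hk
            have := E.bag_conn v i.1 j.1 hvi hvj
              (p.map (SimpleGraph.Embedding.induce Sc).toHom)
              (p.map_isPath_of_injective Subtype.val_injective hp) k.1
              (by have hm := List.mem_map_of_mem (f := (SimpleGraph.Embedding.induce (G := E.tree) Sc).toHom) hk; rwa [← SimpleGraph.Walk.support_map] at hm)
            exact this }
      have hlt : Fintype.card Sc < n := by
        rw [← hcard]
        have : ¬ B ∈ Sc := not_not.mpr hSB
        exact Fintype.card_subtype_lt (x := B) this
      obtain ⟨κ', E', root', h1, h2⟩ := ih (Fintype.card Sc) hlt E₁ ⟨root, hrootSc⟩ rfl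
      refine ⟨κ', E', root', h1, fun i => ?_⟩
      obtain ⟨j, hj⟩ := h2 i
      exact ⟨j.1, hj⟩

/-- For any finite connected graph `G` and any rooted tree decomposition of `G`,
there is a trimmed rooted tree decomposition of `G` whose length is at most the
length of the original one. -/
theorem exists_trimmed_tree_decomp {V ι : Type} [Fintype V] [Fintype ι]
    (G : SimpleGraph V) (hconn : G.Connected) (D : TreeDecomp G ι) (root : ι) :
    ∃ (κ : Type) (E : TreeDecomp G κ) (root' : κ),
      E.Trimmed root' ∧ ∀ k : ℕ, D.LengthLE k → E.LengthLE k := by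
  obtain ⟨κ, E, root', htrim, hsub⟩ := trim_aux G (Fintype.card ι) D root rfl
  refine ⟨κ, E, root', htrim, fun k hk i u hu v hv => ?_⟩
  obtain ⟨j, hj⟩ := hsub i
  exact hk j u (hj hu) v (hj hv)
end

section
/- Let T be a trimmed rooted tree decomposition (or a path decomposition) of a finite connected simple graph G. Let u and v be vertices of G, let B_u be a bag of T containing u, and let B_v be a bag of T containing v. If P is a shortest path between u and v in G, then every bag on the (unique) shortest path in T between B_u and B_v contains at least one vertex of P. -/
/-- Let `T` be a trimmed rooted tree decomposition of a finite connected graph `G`,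
let `u ∈ B_u` and `v ∈ B_v`, and let `P` be a shortest path between `u` and `v` in
`G`. Then every bag on the unique path in the decomposition tree between `B_u` and
`B_v` (i.e. every node lying on all walks from `B_u` to `B_v`) contains a vertex
of `P`. -/
theorem bag_on_path_meets_shortest_path {V ι : Type} [Fintype V] [Fintype ι]
    (G : SimpleGraph V) (hconn : G.Connected) (D : TreeDecomp G ι) (root : ι)
    (htrim : D.Trimmed root) (u v : V) (Bu Bv : ι)
    (hu : u ∈ D.bag Bu) (hv : v ∈ D.bag Bv)
    (P : G.Walk u v) (hP : P.IsPath) (hlen : P.length = G.dist u v) :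
    ∀ B : ι, (∀ q : D.tree.Walk Bu Bv, B ∈ q.support) →
      ∃ x ∈ P.support, x ∈ D.bag B := by
  intro B hB
  classical
  by_contra hcon
  push_neg at hcon
  -- key: for x not in bag B, any two bags containing x are joined by a walk avoiding B
  have key : ∀ x : V, x ∉ D.bag B → ∀ i j, x ∈ D.bag i → x ∈ D.bag j →
      ∃ p : D.tree.Walk i j, B ∉ p.support := by
    intro x hx i j hi hj
    obtain ⟨p⟩ := (D.isTree.1 i j)
    refine ⟨p.toPath, fun hBp => hx ?_⟩
    exact D.bag_conn x i j hi hj p.toPath p.toPath.2 B hBp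
  have main : ∀ {a b : V} (W : G.Walk a b), (∀ x ∈ W.support, x ∉ D.bag B) →
      ∀ i, a ∈ D.bag i → ∃ j, b ∈ D.bag j ∧ ∃ p : D.tree.Walk i j, B ∉ p.support := by
    intro a b W
    induction W with
    | nil =>
      intro hW i hi
      refine ⟨i, hi, SimpleGraph.Walk.nil, ?_⟩
      simp only [SimpleGraph.Walk.support_nil, List.mem_singleton]
      rintro rfl
      exact hW _ (by simp) hi
    | @cons a c b hadj W ih =>
      intro hW i hi
      obtain ⟨k, hak, hck⟩ := D.bag_edge a c hadj
      have ha : a ∉ D.bag B := hW a (by simp)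
      obtain ⟨p1, hp1⟩ := key a ha i k hi hak
      obtain ⟨j, hbj, p2, hp2⟩ := ih (fun x hx => hW x (by simp [hx])) k hck
      refine ⟨j, hbj, p1.append p2, ?_⟩
      rw [SimpleGraph.Walk.mem_support_append_iff]
      rintro (h | h)
      · exact hp1 h
      · exact hp2 h
  obtain ⟨j, hvj, p, hp⟩ := main P hcon Bu hu
  have hvB : v ∉ D.bag B := hcon v (SimpleGraph.Walk.end_mem_support P)
  obtain ⟨p2, hp2⟩ := key v hvB j Bv hvj hv
  have := hB (p.append p2)
  rw [SimpleGraph.Walk.mem_support_append_iff] at this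
  rcases this with h | h
  · exact hp h
  · exact hp2 h
end

section
/- Let n_1 and n_2 be integers with 2 ≤ n_1 ≤ n_2, and let G be the n_1 × n_2 grid graph, i.e., the Cartesian (box) product of a path graph on n_1 vertices and a path graph on n_2 vertices. Then G has a burning sequence of length ⌈√(n_1 + n_2 − 3)⌉ + n_1. -/
open SimpleGraph

/-- auxiliary: starting positions of the covering intervals -/
def sfun (k : ℕ) : ℕ → ℕ
  | 0 => 0
  | (i+1) => sfun k i + 2*(k-i) + 1

lemma sfun_spec (k : ℕ) : ∀ i, i ≤ k → sfun k i + (k-i)*(k-i) = k*k + 2*i := by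
  intro i
  induction i with
  | zero => intro _; simp [sfun]
  | succ i ih =>
    intro h
    have ih' := ih (by omega)
    have h1 : k - i = (k - (i+1)) + 1 := by omega
    have h2 : sfun k (i+1) = sfun k i + 2*(k-i) + 1 := rfl
    rw [h2]
    rw [h1] at ih' ⊢
    set e := k - (i+1)
    nlinarith [ih']

lemma find_idx (k : ℕ) : ∀ t, t ≤ k → ∀ c, c < sfun k t →
    ∃ i < t, sfun k i ≤ c ∧ c < sfun k i + 2*(k-i) + 1 := by
  intro t
  induction t with
  | zero => intro _ c hc; simp [sfun] at hc
  | succ t ih =>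
    intro ht c hc
    by_cases h : c < sfun k t
    · obtain ⟨i, h1, h2, h3⟩ := ih (by omega) c h
      exact ⟨i, by omega, h2, h3⟩
    · have hstep : sfun k (t+1) = sfun k t + 2*(k-t) + 1 := rfl
      rw [hstep] at hc
      exact ⟨t, by omega, by omega, by omega⟩

lemma pathGraph_walk_asc : ∀ (d n : ℕ) (i j : Fin n), i.val + d = j.val →
    ∃ w : (pathGraph n).Walk i j, w.length = d := by
  intro d
  induction d with
  | zero =>
    intro n i j h
    have : i = j := Fin.ext (by omega)
    subst this
    exact ⟨.nil, rfl⟩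
  | succ d ih =>
    intro n i j h
    have hi : i.val + 1 < n := by have := j.isLt; omega
    have hadj : (pathGraph n).Adj i ⟨i.val + 1, hi⟩ := pathGraph_adj.mpr (Or.inl rfl)
    obtain ⟨w, hw⟩ := ih n ⟨i.val + 1, hi⟩ j (by simp; omega)
    exact ⟨.cons hadj w, by simp [hw]⟩

lemma pathGraph_walk (n : ℕ) (i j : Fin n) :
    ∃ w : (pathGraph n).Walk i j, w.length = Nat.dist i.val j.val := by
  rcases le_total i.val j.val with h | h
  · obtain ⟨w, hw⟩ := pathGraph_walk_asc (j.val - i.val) n i j (by omega)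
    exact ⟨w, by rw [hw]; simp [Nat.dist]; omega⟩
  · obtain ⟨w, hw⟩ := pathGraph_walk_asc (i.val - j.val) n j i (by omega)
    exact ⟨w.reverse, by simp [hw, Nat.dist]; omega⟩

lemma grid_dist_le {n₁ n₂ : ℕ} (a b : Fin n₁) (c d : Fin n₂) :
    ((pathGraph n₁).boxProd (pathGraph n₂)).dist (a, c) (b, d)
      ≤ Nat.dist a.val b.val + Nat.dist c.val d.val := by
  obtain ⟨w₁, h₁⟩ := pathGraph_walk n₁ a b
  obtain ⟨w₂, h₂⟩ := pathGraph_walk n₂ c d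
  refine le_trans (SimpleGraph.dist_le
    ((w₁.boxProdLeft (pathGraph n₂) c).append (w₂.boxProdRight (pathGraph n₁) b))) ?_
  have e1 : (w₁.boxProdLeft (pathGraph n₂) c).length = w₁.length := Walk.length_map _ _
  have e2 : (w₂.boxProdRight (pathGraph n₁) b).length = w₂.length := Walk.length_map _ _
  rw [SimpleGraph.Walk.length_append, e1, e2]
  simp [SimpleGraph.Walk.length_append, SimpleGraph.Walk.boxProdLeft,
    SimpleGraph.Walk.boxProdRight, SimpleGraph.Walk.length_map, h₁, h₂]

/-- The `n₁ × n₂` grid graph (the box product of the path graphs on `n₁` and `n₂`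
vertices, with `2 ≤ n₁ ≤ n₂`) has a burning sequence of length
`⌈√(n₁ + n₂ - 3)⌉ + n₁`. -/
theorem burning_seq_grid (n₁ n₂ : ℕ) (h1 : 2 ≤ n₁) (h2 : n₁ ≤ n₂) :
    ∃ a : Fin (⌈Real.sqrt ((n₁ : ℝ) + n₂ - 3)⌉₊ + n₁) → Fin n₁ × Fin n₂,
      IsBurningSeq ((SimpleGraph.pathGraph n₁).boxProd (SimpleGraph.pathGraph n₂))
        (⌈Real.sqrt ((n₁ : ℝ) + n₂ - 3)⌉₊ + n₁) a := by
  set k := ⌈Real.sqrt ((n₁ : ℝ) + n₂ - 3)⌉₊ with hkdef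
  have hnn : (0:ℝ) ≤ (n₁:ℝ) + n₂ - 3 := by
    have h1' : (2:ℝ) ≤ (n₁:ℝ) := by exact_mod_cast h1
    have h2' : (n₁:ℝ) ≤ (n₂:ℝ) := by exact_mod_cast h2
    linarith
  have hceil : Real.sqrt ((n₁:ℝ) + n₂ - 3) ≤ (k:ℝ) := Nat.le_ceil _
  have hsq : ((n₁:ℝ) + n₂ - 3) ≤ (k:ℝ) * k := by
    nlinarith [Real.sq_sqrt hnn, Real.sqrt_nonneg ((n₁:ℝ) + n₂ - 3)]
  have hknat : n₁ + n₂ - 3 ≤ k * k := by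
    have h3 : (3:ℕ) ≤ n₁ + n₂ := by omega
    have hcast : ((n₁ + n₂ - 3 : ℕ) : ℝ) ≤ ((k * k : ℕ) : ℝ) := by
      rw [Nat.cast_sub h3]
      push_cast
      linarith [hsq]
    exact_mod_cast hcast
  have hk1 : 1 ≤ k := by
    rcases Nat.eq_zero_or_pos k with h | h
    · rw [h] at hknat; simp at hknat; omega
    · exact h
  have hsk : sfun k k = k * k + 2 * k := by
    have := sfun_spec k k le_rfl
    simpa using this
  have hn2 : n₂ ≤ sfun k k := by
    rw [hsk]
    have hA : n₂ - 1 ≤ k * k := le_trans (by omega) hknat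
    calc n₂ ≤ (n₂ - 1) + 2 * 1 := by omega
    _ ≤ k * k + 2 * k := Nat.add_le_add hA (by omega)
  refine ⟨fun i => (⟨0, by omega⟩, ⟨min (sfun k i.val + (k - i.val)) (n₂ - 1), by omega⟩), ?_⟩
  rintro ⟨r, c⟩
  obtain ⟨i, hik, hA, hB⟩ := find_idx k k le_rfl c.val (lt_of_lt_of_le c.isLt hn2)
  refine ⟨⟨i, by omega⟩, ?_⟩
  refine le_trans (grid_dist_le r ⟨0, by omega⟩ c
    ⟨min (sfun k i + (k - i)) (n₂ - 1), by omega⟩) ?_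
  have hr := r.isLt
  have hc := c.isLt
  simp only [Nat.dist]
  omega
end

section
/- Let T be a trimmed rooted tree decomposition of a finite connected simple graph G, of length at most tl, and let g ≥ 1 be an integer. Let t be a vertex of G, let B be a bag of T containing t, and let B' be a strict ancestor of B in T such that the child C of B' lying on the path in T from B to B' contains some vertex v with dist(v, t) ≤ g − 1. Then every vertex u ∈ B' satisfies dist(u, t) ≤ g + 2·tl − 1. -/
/-- Let `T` be a trimmed rooted tree decomposition of a finite connected graph `G`
of length at most `tl`, let `g ≥ 1`, let `t ∈ B`, and let `B'` be a strict ancestor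
of `B` such that the child `C` of `B'` on the path from `B` to `B'` contains a
vertex `v` with `dist(v, t) ≤ g - 1`. Then every `u ∈ B'` satisfies
`dist(u, t) ≤ g + 2·tl - 1`. -/
theorem ancestor_bag_dist_bound {V ι : Type} [Fintype V] [Fintype ι]
    (G : SimpleGraph V) (hconn : G.Connected) (D : TreeDecomp G ι) (root : ι)
    (htrim : D.Trimmed root) (tl : ℕ) (hlen : D.LengthLE tl)
    (g : ℕ) (hg : 1 ≤ g) (t : V) (B : ι) (ht : t ∈ D.bag B)
    (B' : ι) (hanc : D.InSubtree root B' B) (hne : B' ≠ B)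
    (C : ι) (hadj : D.tree.Adj B' C)
    (hCpath : ∀ p : D.tree.Walk B B', C ∈ p.support)
    (hv : ∃ v ∈ D.bag C, G.dist v t ≤ g - 1) :
    ∀ u ∈ D.bag B', G.dist u t ≤ g + 2 * tl - 1 := by
  classical
  obtain ⟨v, hvC, hvt⟩ := hv
  intro u huB'
  -- Key claim: some vertex lies in both bags B' and C.
  have key : ∃ w, w ∈ D.bag B' ∧ w ∈ D.bag C := by
    by_contra h
    push_neg at h
    -- S: vertices having a bag on the C-side of the tree edge B'–C
    set S : Set V := {x | ∃ j, D.InSubtree B' C j ∧ x ∈ D.bag j} with hS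
    have step1 : ∀ x ∈ S, ∀ j, ¬ D.InSubtree B' C j → x ∉ D.bag j := by
      rintro x ⟨jin, hjin, hxin⟩ jout hjout hxout
      simp only [TreeDecomp.InSubtree, not_forall] at hjout
      obtain ⟨Q, hQ⟩ := hjout
      have hQp : C ∉ Q.bypass.support := fun hc => hQ (Q.support_bypass_subset hc)
      -- a path from jin to jout; it must contain C
      obtain ⟨w0⟩ := D.isTree.isConnected jin jout
      have hCp : C ∈ w0.bypass.support := by
        by_contra hc
        exact hc (by
          have := hjin (Q.bypass.append w0.bypass.reverse)
          rw [SimpleGraph.Walk.mem_support_append_iff] at this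
          rcases this with h1 | h1
          · exact absurd h1 hQp
          · rw [SimpleGraph.Walk.support_reverse, List.mem_reverse] at h1
            exact absurd h1 hc)
      have hxC : x ∈ D.bag C :=
        D.bag_conn x jin jout hxin hxout w0.bypass w0.bypass_isPath C hCp
      -- path from C to jout through B'
      have hxB' : x ∈ D.bag B' := by
        refine D.bag_conn x C jout hxC hxout (SimpleGraph.Walk.cons hadj.symm Q.bypass)
          ((SimpleGraph.Walk.cons_isPath_iff _ _).mpr ⟨Q.bypass_isPath, hQp⟩) B' ?_
        simp [SimpleGraph.Walk.support_cons]
      exact h x hxB' hxC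
    have step2 : ∀ x y, x ∈ S → G.Adj x y → y ∈ S := by
      intro x y hx hxy
      obtain ⟨k, hxk, hyk⟩ := D.bag_edge x y hxy
      by_cases hk : D.InSubtree B' C k
      · exact ⟨k, hk, hyk⟩
      · exact absurd hxk (step1 x hx k hk)
    have hvS : v ∈ S := ⟨C, fun p => p.end_mem_support, hvC⟩
    have walkS : ∀ {a b : V} (_ : G.Walk a b), a ∈ S → b ∈ S := by
      intro a b p
      induction p with
      | nil => exact id
      | cons hadj' p ih => exact fun ha => ih (step2 _ _ ha hadj')
    have huS : u ∈ S := walkS (hconn v u).some hvS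
    have hB'out : ¬ D.InSubtree B' C B' := by
      intro hIn
      have := hIn SimpleGraph.Walk.nil
      simp only [SimpleGraph.Walk.support_nil, List.mem_singleton] at this
      exact hadj.ne' this
    exact step1 u huS B' hB'out huB'
  obtain ⟨w, hwB', hwC⟩ := key
  have h1 : G.dist u w ≤ tl := hlen B' u huB' w hwB'
  have h2 : G.dist w v ≤ tl := hlen C w hwC v hvC
  have t1 : G.dist u t ≤ G.dist u w + G.dist w t := hconn.dist_triangle
  have t2 : G.dist w t ≤ G.dist w v + G.dist v t := hconn.dist_triangle
  omega
end
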